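/- arXiv:1809.04719 — 4 statements merged into one kernel-verified Lean document; each statement's English description precedes it below -/
import Mathlib

section
/- Let (ξᵢ) be random variables with P(ρₙ > u) ≤ e^{−u} for all u ≥ 0 and n ≥ 3, where ρₙ = (max_{i≤n} ξᵢ − ν⁻¹(ln n))·ν′(ν⁻¹(ln n)). Set zₙ = ν⁻¹(ln n)·ν′(ν⁻¹(ln n)) and let K = inf{Y > 0 : for all ε > 0, Σₙ exp(−(Y+ε)zₙ) < ∞}. Then almost surely limsup_{n→∞} (max_{i≤n} ξᵢ)/ν⁻¹(ln n) ≤ 1 + K. -/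
open MeasureTheory Real Filter

set_option maxHeartbeats 1000000

/-- Borel–Cantelli consequence: a.s. `limsup (max_{i≤n} ξᵢ)/ν⁻¹(ln n) ≤ 1 + K`. -/
theorem limsup_max_le_one_add_K
    {Ω : Type*} [MeasurableSpace Ω] (P : Measure Ω) [IsProbabilityMeasure P]
    (ν ν' : ℝ → ℝ)
    (hconv : ConvexOn ℝ (Set.Ici 0) ν)
    (hderiv : ∀ x : ℝ, HasDerivAt ν (ν' x) x)
    (hν'mono : StrictMono ν')
    (hνlim : Tendsto ν atTop atTop) (hν'lim : Tendsto ν' atTop atTop)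
    (ξ : ℕ → Ω → ℝ)
    (M : ℕ → Ω → ℝ)
    (hM : ∀ n : ℕ, ∀ hn : 0 < n, ∀ ω : Ω,
      M n ω = (Finset.range n).sup' (Finset.nonempty_range_iff.mpr hn.ne') (fun i => ξ i ω))
    (q z : ℕ → ℝ)
    (hq : ∀ n : ℕ, 3 ≤ n → 0 ≤ q n ∧ ν (q n) = Real.log n)
    (hz : ∀ n : ℕ, z n = q n * ν' (q n))
    (htail : ∀ n : ℕ, 3 ≤ n → ∀ u : ℝ, 0 ≤ u →
      (P {ω | u < (M n ω - q n) * ν' (q n)}).toReal ≤ Real.exp (-u))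
    (K : ℝ)
    (hK : K = sInf {Y : ℝ | 0 < Y ∧ ∀ ε : ℝ, 0 < ε →
      Summable (fun n : ℕ => Real.exp (-((Y + ε) * z n)))}) :
    ∀ᵐ ω ∂P, Filter.limsup (fun n : ℕ => M n ω / q n) atTop ≤ 1 + K := by
  classical
  set S : Set ℝ := {Y : ℝ | 0 < Y ∧ ∀ ε : ℝ, 0 < ε →
      Summable (fun n : ℕ => Real.exp (-((Y + ε) * z n)))} with hS
  have hcont : Continuous ν :=
    continuous_iff_continuousAt.2 fun x => (hderiv x).continuousAt
  -- lower bound on z n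
  have hzge : ∀ n : ℕ, 3 ≤ n → Real.log n - ν 0 ≤ z n := by
    intro n hn
    obtain ⟨hq0, hqv⟩ := hq n hn
    rcases eq_or_lt_of_le hq0 with h | h
    · have : Real.log n = ν 0 := by rw [← hqv, ← h]
      simp [hz n, ← h, this]
    · obtain ⟨c, hc, hceq⟩ := exists_hasDerivAt_eq_slope ν ν' h
        (hcont.continuousOn) (fun x _ => hderiv x)
      have hle : ν' c ≤ ν' (q n) := (hν'mono.le_iff_le).2 hc.2.le
      have : (ν (q n) - ν 0) / (q n - 0) ≤ ν' (q n) := hceq ▸ hle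
      rw [sub_zero] at this
      have h2 : ν (q n) - ν 0 ≤ ν' (q n) * q n := by
        have := (div_le_iff₀ h).1 this
        linarith
      rw [hz n, hqv] at *
      linarith [h2, hqv]
  -- q n → ∞
  have hlogtend : Tendsto (fun n : ℕ => Real.log n) atTop atTop :=
    Real.tendsto_log_atTop.comp tendsto_natCast_atTop_atTop
  have hqtend : Tendsto q atTop atTop := by
    rw [tendsto_atTop]
    intro A
    set A' := max A 0 with hA'
    obtain ⟨x₀, _, hx₀⟩ := (isCompact_Icc (a := (0:ℝ)) (b := A')).exists_isMaxOn
      (Set.nonempty_Icc.2 (le_max_right A 0)) hcont.continuousOn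
    filter_upwards [eventually_ge_atTop 3, hlogtend.eventually_gt_atTop (ν x₀)]
      with n hn3 hnlog
    obtain ⟨hq0, hqv⟩ := hq n hn3
    by_contra hcon
    push_neg at hcon
    have hmem : q n ∈ Set.Icc (0:ℝ) A' :=
      ⟨hq0, le_trans hcon.le (le_max_left A 0)⟩
    have : ν (q n) ≤ ν x₀ := hx₀ hmem
    rw [hqv] at this
    exact absurd this (not_le.2 hnlog)
  have hν'qtend : Tendsto (fun n => ν' (q n)) atTop atTop := hν'lim.comp hqtend
  -- K ≥ 0
  have hKnonneg : 0 ≤ K := by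
    rw [hK]; exact Real.sInf_nonneg fun Y hY => hY.1.le
  -- 1 ∈ S
  have hone : (1 : ℝ) ∈ S := by
    refine ⟨one_pos, fun δ hδ => ?_⟩
    set p := 1 + δ with hp
    have hp1 : 1 < p := by linarith
    have hp0 : 0 ≤ p := by linarith
    have hsum : Summable (fun i : ℕ => Real.exp (p * ν 0) * ((i + 3 : ℕ) : ℝ) ^ (-p)) := by
      refine Summable.mul_left _ ?_
      exact (summable_nat_add_iff 3).2 (Real.summable_nat_rpow.2 (by linarith))
    refine (summable_nat_add_iff 3).1 ?_
    refine Summable.of_nonneg_of_le (fun i => (Real.exp_pos _).le) (fun i => ?_) hsum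
    have hz3 := hzge (i + 3) (by omega)
    have hpos : (0:ℝ) < ((i + 3 : ℕ) : ℝ) := by positivity
    have hrw : ((i + 3 : ℕ) : ℝ) ^ (-p) = Real.exp (-(p * Real.log ((i + 3 : ℕ) : ℝ))) := by
      rw [Real.rpow_def_of_pos hpos]; ring_nf
    rw [hrw, ← Real.exp_add, Real.exp_le_exp]
    have : p * (Real.log ((i + 3 : ℕ) : ℝ) - ν 0) ≤ p * z (i + 3) :=
      mul_le_mul_of_nonneg_left hz3 hp0
    have hpz : p = 1 + δ := hp
    nlinarith [this]
  have hSne : S.Nonempty := ⟨1, hone⟩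
  -- main ε-step
  have main : ∀ ε : ℝ, 0 < ε →
      ∀ᵐ ω ∂P, Filter.limsup (fun n : ℕ => M n ω / q n) atTop ≤ 1 + K + ε := by
    intro ε hε
    obtain ⟨Y, hYS, hYlt⟩ := Real.lt_sInf_add_pos hSne (half_pos hε)
    have hYK : Y + ε / 2 ≤ K + ε := by rw [hK]; linarith
    have hsumY : Summable (fun n : ℕ => Real.exp (-((Y + ε / 2) * z n))) :=
      hYS.2 _ (half_pos hε)
    -- choose N beyond which n ≥ 3 and z n ≥ 0
    have hev : ∀ᶠ n : ℕ in atTop, 3 ≤ n ∧ 0 ≤ z n := by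
      filter_upwards [eventually_ge_atTop 3, hlogtend.eventually_ge_atTop (ν 0)]
        with n h1 h2
      exact ⟨h1, le_trans (by linarith) (hzge n h1)⟩
    obtain ⟨N, hN⟩ := eventually_atTop.1 hev
    set s : ℕ → Set Ω := fun n => {ω | (K + ε) * z n < (M n ω - q n) * ν' (q n)} with hsdef
    have hKε : 0 ≤ K + ε := by linarith
    have hbound : ∀ i : ℕ, P (s (i + N)) ≤
        ENNReal.ofReal (Real.exp (-((Y + ε / 2) * z (i + N)))) := by
      intro i
      obtain ⟨h3, hz0⟩ := hN (i + N) (Nat.le_add_left N i)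
      have hu : 0 ≤ (K + ε) * z (i + N) := mul_nonneg hKε hz0
      have h1 := htail (i + N) h3 _ hu
      have h2 : Real.exp (-((K + ε) * z (i + N))) ≤
          Real.exp (-((Y + ε / 2) * z (i + N))) := by
        rw [Real.exp_le_exp]
        have := mul_le_mul_of_nonneg_right hYK hz0
        linarith
      calc P (s (i + N)) = ENNReal.ofReal ((P (s (i + N))).toReal) :=
            (ENNReal.ofReal_toReal (measure_ne_top P _)).symm
        _ ≤ ENNReal.ofReal (Real.exp (-((Y + ε / 2) * z (i + N)))) :=
            ENNReal.ofReal_le_ofReal (le_trans h1 h2)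
    have hfin : (∑' n : ℕ, P (s n)) ≠ ⊤ := by
      rw [← Summable.sum_add_tsum_nat_add' (f := fun n => P (s n)) (k := N) ENNReal.summable]
      refine ENNReal.add_ne_top.2 ⟨?_, ?_⟩
      · exact (ENNReal.sum_lt_top.2 fun i _ => measure_lt_top P _).ne
      · have htle : (∑' i : ℕ, P (s (i + N))) ≤
            ∑' i : ℕ, ENNReal.ofReal (Real.exp (-((Y + ε / 2) * z (i + N)))) :=
          ENNReal.tsum_le_tsum hbound
        have hsum' : Summable (fun i : ℕ => Real.exp (-((Y + ε / 2) * z (i + N)))) :=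
          (summable_nat_add_iff N).2 hsumY
        have := ENNReal.ofReal_tsum_of_nonneg (fun i => (Real.exp_pos _).le) hsum'
        exact ne_top_of_le_ne_top (this ▸ ENNReal.ofReal_ne_top) htle
    have hae := ae_eventually_notMem hfin
    have hq1 : ∀ᶠ n : ℕ in atTop, 1 ≤ q n := hqtend.eventually_ge_atTop 1
    have hq2 : ∀ᶠ n : ℕ in atTop, 1 ≤ ν' (q n) := hν'qtend.eventually_ge_atTop 1
    filter_upwards [hae] with ω hω
    have hev2 : ∀ᶠ n : ℕ in atTop, M n ω / q n ≤ 1 + K + ε := by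
      filter_upwards [hω, hq1, hq2] with n h1 h2 h3
      have h1' : (M n ω - q n) * ν' (q n) ≤ (K + ε) * z n := not_lt.1 h1
      rw [hz n] at h1'
      have hν'pos : (0:ℝ) < ν' (q n) := by linarith
      have hqpos : (0:ℝ) < q n := by linarith
      have hM' : M n ω - q n ≤ (K + ε) * q n := by
        have : (M n ω - q n) * ν' (q n) ≤ ((K + ε) * q n) * ν' (q n) := by
          nlinarith
        exact le_of_mul_le_mul_right this hν'pos
      rw [div_le_iff₀ hqpos]
      nlinarith
    rw [Filter.limsup_eq]
    by_cases hbd : BddBelow {a : ℝ | ∀ᶠ n : ℕ in atTop, M n ω / q n ≤ a}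
    · exact csInf_le hbd hev2
    · rw [Real.sInf_of_not_bddBelow hbd]; linarith
  -- conclude
  have hall : ∀ᵐ ω ∂P, ∀ k : ℕ,
      Filter.limsup (fun n : ℕ => M n ω / q n) atTop ≤ 1 + K + 1 / ((k : ℝ) + 1) :=
    ae_all_iff.2 fun k => main (1 / ((k : ℝ) + 1)) (by positivity)
  filter_upwards [hall] with ω hω
  by_contra hcon
  push_neg at hcon
  obtain ⟨k, hk⟩ := exists_nat_one_div_lt (sub_pos.2 hcon)
  have := hω k
  linarith
end

section
/- If for every ε > 0 the series Σₙ exp(−ε zₙ) converges, where zₙ = ν⁻¹(ln n)·ν′(ν⁻¹(ln n)) and (ξᵢ) satisfies the uniform tail bound P((max_{i≤n}ξᵢ − ν⁻¹(ln n))·ν′(ν⁻¹(ln n)) > u) ≤ e^{−u} for u ≥ 0, then almost surely limsup_{n→∞} (max_{i≤n} ξᵢ)/ν⁻¹(ln n) ≤ 1. -/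
open MeasureTheory Real Filter

/-- If for every ε>0 the series Σ exp(-ε zₙ) converges, then a.s.
`limsup (max_{i≤n} ξᵢ)/ν⁻¹(ln n) ≤ 1`. -/
theorem limsup_max_le_one
    {Ω : Type*} [MeasurableSpace Ω] (P : Measure Ω) [IsProbabilityMeasure P]
    (ν ν' : ℝ → ℝ)
    (hconv : ConvexOn ℝ (Set.Ici 0) ν)
    (hderiv : ∀ x : ℝ, HasDerivAt ν (ν' x) x)
    (hν'mono : StrictMono ν')
    (hνlim : Tendsto ν atTop atTop) (hν'lim : Tendsto ν' atTop atTop)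
    (ξ : ℕ → Ω → ℝ)
    (M : ℕ → Ω → ℝ)
    (hM : ∀ n : ℕ, ∀ hn : 0 < n, ∀ ω : Ω,
      M n ω = (Finset.range n).sup' (Finset.nonempty_range_iff.mpr hn.ne') (fun i => ξ i ω))
    (q z : ℕ → ℝ)
    (hq : ∀ n : ℕ, 3 ≤ n → 0 ≤ q n ∧ ν (q n) = Real.log n)
    (hz : ∀ n : ℕ, z n = q n * ν' (q n))
    (htail : ∀ n : ℕ, 3 ≤ n → ∀ u : ℝ, 0 ≤ u →
      (P {ω | u < (M n ω - q n) * ν' (q n)}).toReal ≤ Real.exp (-u))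
    (hsum : ∀ ε : ℝ, 0 < ε → Summable (fun n : ℕ => Real.exp (-(ε * z n)))) :
    ∀ᵐ ω ∂P, Filter.limsup (fun n : ℕ => M n ω / q n) atTop ≤ 1 := by
  -- ν is continuous
  have hνcont : Continuous ν := by
    rw [continuous_iff_continuousAt]
    exact fun x => (hderiv x).continuousAt
  -- log n → ∞
  have hlog : Tendsto (fun n : ℕ => Real.log n) atTop atTop :=
    Real.tendsto_log_atTop.comp tendsto_natCast_atTop_atTop
  -- q n → ∞
  have hqtend : Tendsto q atTop atTop := by
    rw [tendsto_atTop]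
    intro C
    obtain ⟨B, hB⟩ : ∃ B, ∀ x ∈ Set.Icc (0:ℝ) (max C 0), ν x ≤ B := by
      obtain ⟨B, hB⟩ := (isCompact_Icc (a := (0:ℝ)) (b := max C 0)).bddAbove_image
        hνcont.continuousOn
      exact ⟨B, fun x hx => hB ⟨x, hx, rfl⟩⟩
    filter_upwards [hlog.eventually_gt_atTop B, eventually_ge_atTop 3] with n hn h3
    obtain ⟨hq0, hqn⟩ := hq n h3
    by_contra h
    push_neg at h
    have : q n ∈ Set.Icc (0:ℝ) (max C 0) := ⟨hq0, le_trans h.le (le_max_left _ _)⟩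
    have := hB _ this
    rw [hqn] at this
    exact absurd this (not_le.mpr hn)
  have hν'q : Tendsto (fun n => ν' (q n)) atTop atTop := hν'lim.comp hqtend
  -- the main step for a fixed ε > 0
  have key : ∀ ε : ℝ, 0 < ε →
      ∀ᵐ ω ∂P, Filter.limsup (fun n : ℕ => M n ω / q n) atTop ≤ 1 + ε := by
    intro ε hε
    obtain ⟨N₀, hN₀⟩ : ∃ N₀, ∀ n ≥ N₀, 3 ≤ n ∧ 0 < q n ∧ 0 < ν' (q n) := by
      have h1 := eventually_ge_atTop (3:ℕ)
      have h2 := hqtend.eventually_gt_atTop 0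
      have h3 := hν'q.eventually_gt_atTop 0
      rcases (h1.and (h2.and h3)).exists_forall_of_atTop with ⟨N₀, hN₀⟩
      exact ⟨N₀, fun n hn => ⟨(hN₀ n hn).1, (hN₀ n hn).2.1, (hN₀ n hn).2.2⟩⟩
    set s : ℕ → Set Ω := fun n =>
      if N₀ ≤ n then {ω | ε * z n < (M n ω - q n) * ν' (q n)} else ∅ with hs
    have hbound : ∀ n, P (s n) ≤ ENNReal.ofReal (Real.exp (-(ε * z n))) := by
      intro n
      by_cases h : N₀ ≤ n
      · obtain ⟨h3, hq0, hν'0⟩ := hN₀ n h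
        have hz0 : 0 ≤ z n := by rw [hz n]; positivity
        have hεz : 0 ≤ ε * z n := by positivity
        have htail' := htail n h3 (ε * z n) hεz
        have hfin : P {ω | ε * z n < (M n ω - q n) * ν' (q n)} ≠ ⊤ :=
          (measure_lt_top P _).ne
        rw [hs]
        simp only [if_pos h]
        rw [← ENNReal.ofReal_toReal hfin]
        exact ENNReal.ofReal_le_ofReal htail'
      · rw [hs]; simp [h]
    have hsum' : (∑' n, P (s n)) ≠ ⊤ := by
      have h1 : (∑' n, P (s n)) ≤ ∑' n, ENNReal.ofReal (Real.exp (-(ε * z n))) :=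
        ENNReal.tsum_le_tsum hbound
      have h2 : (∑' n, ENNReal.ofReal (Real.exp (-(ε * z n)))) =
          ENNReal.ofReal (∑' n, Real.exp (-(ε * z n))) :=
        (ENNReal.ofReal_tsum_of_nonneg (fun n => (Real.exp_pos _).le) (hsum ε hε)).symm
      rw [h2] at h1
      exact ne_top_of_le_ne_top ENNReal.ofReal_ne_top h1
    filter_upwards [ae_eventually_notMem hsum'] with ω hω
    have hev : ∀ᶠ n in atTop, M n ω / q n ≤ 1 + ε := by
      filter_upwards [hω, eventually_ge_atTop N₀] with n hn hN
      obtain ⟨h3, hq0, hν'0⟩ := hN₀ n hN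
      rw [hs] at hn
      simp only [if_pos hN, Set.mem_setOf_eq, not_lt] at hn
      -- (M n ω - q n) * ν' (q n) ≤ ε * z n = ε * q n * ν' (q n)
      rw [hz n] at hn
      have h4 : M n ω - q n ≤ ε * q n := by
        have := (mul_le_mul_iff_left₀ hν'0).mp (by linarith [hn] : (M n ω - q n) * ν' (q n) ≤ (ε * q n) * ν' (q n))
        linarith
      rw [div_le_iff₀ hq0]
      linarith
    by_cases hcb : IsCoboundedUnder (· ≤ ·) atTop (fun n : ℕ => M n ω / q n)
    · exact limsup_le_of_le hcb hev
    · have hnb : ¬ BddBelow {a : ℝ | ∀ᶠ n : ℕ in atTop, M n ω / q n ≤ a} := by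
        rintro ⟨b, hb⟩
        exact hcb ⟨b, fun a ha => hb ha⟩
      rw [Filter.limsup_eq, Real.sInf_of_not_bddBelow hnb]
      linarith
  -- combine over ε = 1/(k+1)
  have hall : ∀ᵐ ω ∂P, ∀ k : ℕ,
      Filter.limsup (fun n : ℕ => M n ω / q n) atTop ≤ 1 + 1 / (k + 1) := by
    rw [ae_all_iff]
    intro k
    exact key (1 / (k + 1)) (by positivity)
  filter_upwards [hall] with ω hω
  refine le_of_forall_pos_le_add ?_
  intro ε hε
  obtain ⟨k, hk⟩ := exists_nat_one_div_lt hε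
  exact (hω k).trans (by linarith)
end

section
/- Let (ξᵢ) be random variables with P(ξᵢ > x) ≤ exp(−x²/2) for x ≥ 1. Then for n ≥ 3, max_{i≤n} ξᵢ = √(2 ln n) + ρₙ/√(2 ln n) with P(ρₙ > u) ≤ e^{−u} for u ≥ 0, and almost surely limsup_{n→∞} (max_{i≤n} ξᵢ)/√(2 ln n) ≤ 3/2. -/
open MeasureTheory Real Filter

/-- Subgaussian case `m = 2`: representation of the maximum, tail bound for `ρₙ`,
and a.s. `limsup maxᵢξᵢ/√(2 ln n) ≤ 3/2`. -/
theorem max_tail_estimate_subgaussian_case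
    {Ω : Type*} [MeasurableSpace Ω] (P : Measure Ω) [IsProbabilityMeasure P]
    (ξ : ℕ → Ω → ℝ)
    (htail : ∀ i : ℕ, ∀ x : ℝ, 1 ≤ x →
      (P {ω | x < ξ i ω}).toReal ≤ Real.exp (-(x ^ 2 / 2)))
    (M : ℕ → Ω → ℝ)
    (hM : ∀ n : ℕ, ∀ hn : 0 < n, ∀ ω : Ω,
      M n ω = (Finset.range n).sup' (Finset.nonempty_range_iff.mpr hn.ne') (fun i => ξ i ω)) :
    ∃ ρ : ℕ → Ω → ℝ,
      (∀ n : ℕ, 3 ≤ n → ∀ ω : Ω,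
        M n ω = Real.sqrt (2 * Real.log n) + ρ n ω / Real.sqrt (2 * Real.log n))
      ∧ (∀ n : ℕ, 3 ≤ n → ∀ u : ℝ, 0 ≤ u →
        (P {ω | u < ρ n ω}).toReal ≤ Real.exp (-u))
      ∧ (∀ᵐ ω ∂P, Filter.limsup
          (fun n : ℕ => M n ω / Real.sqrt (2 * Real.log n)) atTop ≤ 3 / 2) := by
  classical
  -- basic facts about log n for n ≥ 3
  have hlog : ∀ n : ℕ, 3 ≤ n → 1 ≤ Real.log n := by
    intro n hn
    have h3 : (3 : ℝ) ≤ (n : ℝ) := by exact_mod_cast hn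
    have : (1 : ℝ) ≤ Real.log 3 := by
      rw [Real.le_log_iff_exp_le (by norm_num)]
      have := Real.exp_one_lt_d9
      linarith
    calc (1:ℝ) ≤ Real.log 3 := this
      _ ≤ Real.log n := Real.log_le_log (by norm_num) h3
  have hs1 : ∀ n : ℕ, 3 ≤ n → 1 ≤ Real.sqrt (2 * Real.log n) := by
    intro n hn
    have := hlog n hn
    rw [show (1:ℝ) = Real.sqrt 1 by simp]
    exact Real.sqrt_le_sqrt (by linarith)
  -- key union bound
  have key : ∀ n : ℕ, 0 < n → ∀ x : ℝ, 1 ≤ x →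
      (P {ω | x < M n ω}).toReal ≤ n * Real.exp (-(x ^ 2 / 2)) := by
    intro n hn x hx
    have hset : {ω | x < M n ω} = ⋃ i ∈ Finset.range n, {ω | x < ξ i ω} := by
      ext ω
      simp only [Set.mem_setOf_eq, Set.mem_iUnion, hM n hn ω, Finset.lt_sup'_iff,
        exists_prop]
    rw [hset]
    calc (P (⋃ i ∈ Finset.range n, {ω | x < ξ i ω})).toReal
        ≤ (∑ i ∈ Finset.range n, P {ω | x < ξ i ω}).toReal := by
          refine ENNReal.toReal_mono ?_ (measure_biUnion_finset_le _ _)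
          exact (ENNReal.sum_lt_top.mpr fun i _ => measure_lt_top P _).ne
      _ = ∑ i ∈ Finset.range n, (P {ω | x < ξ i ω}).toReal :=
          ENNReal.toReal_sum fun i _ => measure_ne_top P _
      _ ≤ ∑ _i ∈ Finset.range n, Real.exp (-(x ^ 2 / 2)) :=
          Finset.sum_le_sum fun i _ => htail i x hx
      _ = n * Real.exp (-(x ^ 2 / 2)) := by
          simp [Finset.sum_const, Finset.card_range, nsmul_eq_mul]
  refine ⟨fun n ω => (M n ω - Real.sqrt (2 * Real.log n)) * Real.sqrt (2 * Real.log n),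
    ?_, ?_, ?_⟩
  · intro n hn ω
    have hs : (0:ℝ) < Real.sqrt (2 * Real.log n) := lt_of_lt_of_le one_pos (hs1 n hn)
    rw [mul_div_cancel_right₀ _ hs.ne']
    ring
  · intro n hn u hu
    set s := Real.sqrt (2 * Real.log n) with hsdef
    have hspos : (0:ℝ) < s := lt_of_lt_of_le one_pos (hs1 n hn)
    have hsq : s ^ 2 = 2 * Real.log n := by
      rw [hsdef, Real.sq_sqrt]
      have := hlog n hn; linarith
    have hnpos : (0:ℝ) < n := by positivity
    set x := s + u / s with hxdef
    have hx1 : 1 ≤ x := by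
      have : 0 ≤ u / s := div_nonneg hu hspos.le
      have := hs1 n hn
      simp only [hxdef]; linarith
    have hset : {ω | u < (M n ω - s) * s} = {ω | x < M n ω} := by
      ext ω
      simp only [Set.mem_setOf_eq, hxdef]
      rw [← div_lt_iff₀ hspos]
      constructor <;> intro h <;> linarith
    have hx2 : Real.log n + u ≤ x ^ 2 / 2 := by
      have husq : 0 ≤ (u / s) ^ 2 := sq_nonneg _
      have hsu : s * (u / s) = u := by field_simp
      have hexp : x ^ 2 = s ^ 2 + 2 * (s * (u / s)) + (u / s) ^ 2 := by
        rw [hxdef]; ring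
      rw [hsu] at hexp
      rw [hexp, hsq]; linarith
    calc (P {ω | u < (M n ω - s) * s}).toReal
        ≤ n * Real.exp (-(x ^ 2 / 2)) := by rw [hset]; exact key n (by omega) x hx1
      _ ≤ n * Real.exp (-(Real.log n + u)) := by
          gcongr
      _ = Real.exp (-u) := by
          rw [neg_add, Real.exp_add, Real.exp_neg, Real.exp_log hnpos]
          field_simp
  · -- Borel–Cantelli
    set t : ℕ → Set Ω := fun k =>
      {ω | 3 / 2 * Real.sqrt (2 * Real.log (k + 3 : ℕ)) < M (k + 3) ω} with htdef
    have hbound : ∀ k : ℕ, P (t k) ≤ ENNReal.ofReal (((k + 3 : ℕ) : ℝ) ^ (-(5/4) : ℝ)) := by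
      intro k
      set n : ℕ := k + 3 with hndef
      have hn3 : 3 ≤ n := by omega
      set s := Real.sqrt (2 * Real.log n) with hsdef
      have hs1' : 1 ≤ s := hs1 n hn3
      have hsq : s ^ 2 = 2 * Real.log n := by
        rw [hsdef, Real.sq_sqrt]
        have := hlog n hn3; linarith
      have hnpos : (0:ℝ) < n := by positivity
      have hx1 : (1:ℝ) ≤ 3 / 2 * s := by linarith
      have h1 : (P (t k)).toReal ≤ n * Real.exp (-((3 / 2 * s) ^ 2 / 2)) :=
        key n (by omega) _ hx1
      have h2 : (n : ℝ) * Real.exp (-((3 / 2 * s) ^ 2 / 2)) = (n : ℝ) ^ (-(5/4) : ℝ) := by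
        have hxsq : (3 / 2 * s) ^ 2 / 2 = 9 / 4 * Real.log n := by
          have : (3 / 2 * s) ^ 2 = 9 / 4 * s ^ 2 := by ring
          rw [this, hsq]; ring
        rw [hxsq]
        rw [show -(9 / 4 * Real.log (n:ℝ)) = Real.log (n:ℝ) * (-(9/4)) by ring,
          ← Real.rpow_def_of_pos hnpos]
        rw [show (n:ℝ) * (n:ℝ) ^ (-(9/4) : ℝ)
            = (n:ℝ) ^ (1:ℝ) * (n:ℝ) ^ (-(9/4) : ℝ) by rw [Real.rpow_one],
          ← Real.rpow_add hnpos]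
        norm_num
      rw [ENNReal.le_ofReal_iff_toReal_le (measure_ne_top P _) (by positivity)]
      rw [← h2]; exact h1
    have hsummable : Summable fun k : ℕ => ((k + 3 : ℕ) : ℝ) ^ (-(5/4) : ℝ) := by
      have := (summable_nat_add_iff (f := fun n : ℕ => (n : ℝ) ^ (-(5/4) : ℝ)) 3).mpr
        (summable_nat_rpow.mpr (by norm_num))
      exact this
    have htsum : ∑' k, P (t k) ≠ ⊤ := by
      have h1 : ∑' k, P (t k) ≤ ∑' k, ENNReal.ofReal (((k + 3 : ℕ) : ℝ) ^ (-(5/4) : ℝ)) :=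
        ENNReal.tsum_le_tsum hbound
      have h2 : ∑' k, ENNReal.ofReal (((k + 3 : ℕ) : ℝ) ^ (-(5/4) : ℝ))
          = ENNReal.ofReal (∑' k, ((k + 3 : ℕ) : ℝ) ^ (-(5/4) : ℝ)) :=
        (ENNReal.ofReal_tsum_of_nonneg (fun k => by positivity) hsummable).symm
      rw [← lt_top_iff_ne_top]
      exact lt_of_le_of_lt h1 (h2 ▸ ENNReal.ofReal_lt_top)
    filter_upwards [ae_eventually_notMem htsum] with ω hω
    obtain ⟨K, hK⟩ := hω.exists_forall_of_atTop
    have hev : ∀ᶠ n : ℕ in atTop, M n ω / Real.sqrt (2 * Real.log n) ≤ 3 / 2 := by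
      rw [eventually_atTop]
      refine ⟨K + 3, fun n hn => ?_⟩
      have hn3 : 3 ≤ n := by omega
      have hspos : (0:ℝ) < Real.sqrt (2 * Real.log n) := lt_of_lt_of_le one_pos (hs1 n hn3)
      have := hK (n - 3) (by omega)
      simp only [htdef, Set.mem_setOf_eq, not_lt] at this
      rw [show n - 3 + 3 = n by omega] at this
      rw [div_le_iff₀ hspos]
      linarith [this]
    rw [Filter.limsup_eq]
    by_cases hbdd : BddBelow {a : ℝ | ∀ᶠ n : ℕ in atTop, M n ω / Real.sqrt (2 * Real.log n) ≤ a}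
    · exact csInf_le hbdd hev
    · rw [Real.sInf_of_not_bddBelow hbdd]; norm_num
end

section
/- Let (ξᵢ) be independent random variables with P(ξᵢ > x) = exp(−ν(x)) for x ≥ 1, ν a C² Young–Orlicz function with ν, ν′ strictly increasing to infinity. Fix n ≥ 3 and set qₙ = ν⁻¹(ln n), wₙ = 1/ν′(qₙ), ρₙ = (max_{i≤n}ξᵢ − qₙ)/wₙ. Suppose εₙ, Θₙ, γₙ > 0 satisfy 2Rₙ = sup_{0≤u≤Θₙ} |ν″(qₙ + u wₙ)|, εₙ = Rₙ wₙ², Θₙ = γₙ/√εₙ. Then for all u ∈ [1, Θₙ] (with qₙ + u wₙ ≥ 1): P(ρₙ > u) ≥ e^{−γₙ²} e^{−u} − e^{−2u}. -/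
open MeasureTheory Real Filter ProbabilityTheory

private lemma bern_aux (p : ℝ) (hp0 : 0 ≤ p) (hp1 : p ≤ 1) :
    ∀ n : ℕ, (1 - p) ^ n ≤ 1 - n * p + (n * (n - 1) / 2) * p ^ 2 := by
  intro n
  induction n with
  | zero => simp
  | succ n ih =>
    have h1p : (0 : ℝ) ≤ 1 - p := by linarith
    have hstep : (1 - p) ^ (n + 1) ≤ (1 - n * p + (n * (n - 1) / 2) * p ^ 2) * (1 - p) := by
      rw [pow_succ]
      exact mul_le_mul_of_nonneg_right ih h1p
    have hn0 : (0 : ℝ) ≤ (n : ℝ) := Nat.cast_nonneg n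
    refine hstep.trans ?_
    push_cast
    have hnn1 : (0:ℝ) ≤ (n:ℝ) * ((n:ℝ) - 1) := by
      rcases Nat.eq_zero_or_pos n with h | h
      · simp [h]
      · have : (1:ℝ) ≤ (n:ℝ) := by exact_mod_cast h
        nlinarith
    nlinarith [mul_nonneg hnn1 (mul_nonneg hp0 (mul_nonneg hp0 hp0))]

set_option maxHeartbeats 2000000 in
/-- Lower estimate for the tail of the normalized maximum, via Bonferroni. -/
theorem max_tail_lower_estimate
    {Ω : Type*} [MeasurableSpace Ω] (P : Measure Ω) [IsProbabilityMeasure P]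
    (ν ν' ν'' : ℝ → ℝ)
    (hderiv : ∀ x : ℝ, HasDerivAt ν (ν' x) x)
    (hderiv' : ∀ x : ℝ, HasDerivAt ν' (ν'' x) x)
    (hνmono : StrictMonoOn ν (Set.Ici 0)) (hν'mono : StrictMonoOn ν' (Set.Ici 0))
    (hνlim : Tendsto ν atTop atTop) (hν'lim : Tendsto ν' atTop atTop)
    (hν0 : ν 0 = 0) (hν'pos : ∀ x : ℝ, 0 < x → 0 < ν' x)
    (ξ : ℕ → Ω → ℝ) (hmeas : ∀ i, Measurable (ξ i))
    (hindep : iIndepFun ξ P)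
    (htail : ∀ i : ℕ, ∀ x : ℝ, 1 ≤ x →
      (P {ω | x < ξ i ω}).toReal = Real.exp (-ν x))
    (n : ℕ) (hn : 3 ≤ n)
    (q w : ℝ) (hq : 0 ≤ q) (hνq : ν q = Real.log n) (hw : w = 1 / ν' q)
    (R ε Θ γ : ℝ) (hγ : 0 < γ) (hε : 0 < ε)
    (hR : 2 * R = sSup {y : ℝ | ∃ u ∈ Set.Icc (0 : ℝ) Θ, y = |ν'' (q + u * w)|})
    (hεR : ε = R * w ^ 2) (hΘ : Θ = γ / Real.sqrt ε)
    (u : ℝ) (hu : u ∈ Set.Icc (1 : ℝ) Θ) (harg : 1 ≤ q + u * w) :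
    Real.exp (-γ ^ 2) * Real.exp (-u) - Real.exp (-(2 * u)) ≤
      (P {ω | u <
        ((Finset.range n).sup' (Finset.nonempty_range_iff.mpr (by omega))
          (fun i => ξ i ω) - q) / w}).toReal := by
  classical
  obtain ⟨hu1, huΘ⟩ := hu
  have hupos : 0 < u := lt_of_lt_of_le one_pos hu1
  -- basic positivity
  have hn1 : (1 : ℝ) < (n : ℝ) := by
    have : (3 : ℝ) ≤ (n : ℝ) := by exact_mod_cast hn
    linarith
  have hlogn : 0 < Real.log n := Real.log_pos hn1
  have hqpos : 0 < q := by
    rcases hq.lt_or_eq with h | h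
    · exact h
    · exfalso; rw [← h, hν0] at hνq; linarith [hνq ▸ hlogn]
  have hν'q : 0 < ν' q := hν'pos q hqpos
  have hwpos : 0 < w := by rw [hw]; positivity
  have hRpos : 0 < R := by
    rcases mul_pos_iff.mp (hεR ▸ hε : (0:ℝ) < R * w ^ 2) with ⟨h, _⟩ | ⟨_, h⟩
    · exact h
    · exact absurd h (not_lt.mpr (sq_nonneg w))
  have hΘpos : 0 < Θ := lt_of_lt_of_le hupos huΘ
  set c := q + u * w with hc
  have huw : 0 ≤ u * w := mul_nonneg hupos.le hwpos.le
  have huwΘw : u * w ≤ Θ * w := mul_le_mul_of_nonneg_right huΘ hwpos.le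
  have hqΘw : q ≤ q + Θ * w := by linarith [mul_pos hΘpos hwpos]
  have hqc : q ≤ c := by rw [hc]; linarith
  -- the sup set is bounded above (else sSup = 0 = 2R, contradiction)
  have hBdd : BddAbove {y : ℝ | ∃ u ∈ Set.Icc (0 : ℝ) Θ, y = |ν'' (q + u * w)|} := by
    by_contra h
    rw [Real.sSup_of_not_bddAbove h] at hR
    linarith
  have hbound : ∀ x ∈ Set.Icc q (q + Θ * w), |ν'' x| ≤ 2 * R := by
    intro x hx
    rw [hR]
    refine le_csSup hBdd ?_
    refine ⟨(x - q) / w, ⟨?_, ?_⟩, ?_⟩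
    · exact div_nonneg (by linarith [hx.1]) hwpos.le
    · rw [div_le_iff₀ hwpos]; linarith [hx.2]
    · rw [div_mul_cancel₀ _ hwpos.ne']; ring_nf
  -- MVT for ν' : |ν' x - ν' q| ≤ 2R (x - q) on [q, q+Θw]
  have hν'bd : ∀ x ∈ Set.Icc q (q + Θ * w), |ν' x - ν' q| ≤ 2 * R * (x - q) := by
    intro x hx
    have := Convex.norm_image_sub_le_of_norm_hasDerivWithin_le
      (f := ν') (f' := ν'') (s := Set.Icc q (q + Θ * w)) (C := 2 * R)
      (fun y _ => (hderiv' y).hasDerivWithinAt) (fun y hy => by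
        rw [Real.norm_eq_abs]; exact hbound y hy) (convex_Icc _ _)
      (Set.left_mem_Icc.2 hqΘw) hx
    rwa [Real.norm_eq_abs, Real.norm_eq_abs, abs_of_nonneg (sub_nonneg.mpr hx.1)] at this
  have hcmem : c ∈ Set.Icc q (q + Θ * w) := ⟨hqc, by rw [hc]; linarith⟩
  -- Taylor bounds for ν at c
  have taylor : |ν c - ν q - ν' q * (u * w)| ≤ R * (u * w) ^ 2 := by
    have key : ∀ (σ : ℝ), σ = 1 ∨ σ = -1 →
        0 ≤ σ * (ν (q + u * w) - ν q - ν' q * (u * w)) + R * (u * w) ^ 2 := by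
      intro σ hσ
      set G : ℝ → ℝ := fun s => σ * (ν (q + s) - ν q - ν' q * s) + R * s ^ 2 with hG
      have hG0 : G 0 = 0 := by simp [hG]
      have hGd : ∀ s : ℝ, HasDerivAt G (σ * (ν' (q + s) - ν' q) + 2 * R * s) s := by
        intro s
        have h1 : HasDerivAt (fun s : ℝ => ν (q + s)) (ν' (q + s)) s := by
          have := (hderiv (q + s)).comp s ((hasDerivAt_const s q).add (hasDerivAt_id s))
          simpa [Function.comp_def] using this
        have h2 : HasDerivAt (fun s : ℝ => ν (q + s) - ν q - ν' q * s)
            (ν' (q + s) - ν' q) s := by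
          simpa [Pi.sub_def] using (h1.sub_const (ν q)).sub ((hasDerivAt_id s).const_mul (ν' q))
        have h3 : HasDerivAt (fun s : ℝ => R * s ^ 2) (2 * R * s) s := by
          simpa [mul_comm, mul_assoc, mul_left_comm] using
            ((hasDerivAt_pow 2 s).const_mul R)
        simpa [hG, Pi.add_def] using (h2.const_mul σ).add h3
      have hmono : MonotoneOn G (Set.Icc 0 (u * w)) := by
        apply monotoneOn_of_deriv_nonneg (convex_Icc _ _)
          (fun s _ => (hGd s).continuousAt.continuousWithinAt)
          (fun s _ => ((hGd s).differentiableAt).differentiableWithinAt)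
        intro s hs
        rw [interior_Icc] at hs
        rw [(hGd s).deriv]
        have hsmem : q + s ∈ Set.Icc q (q + Θ * w) := by
          constructor
          · linarith [hs.1]
          · have h7 : s < u * w := hs.2
            linarith
        have h4 := hν'bd (q + s) hsmem
        have h5 : |ν' (q + s) - ν' q| ≤ 2 * R * s := by
          simpa using h4
        have h6 : -(2 * R * s) ≤ ν' (q + s) - ν' q ∧ ν' (q + s) - ν' q ≤ 2 * R * s :=
          abs_le.mp h5
        have hs0 : 0 ≤ s := le_of_lt hs.1
        rcases hσ with h | h <;> rw [h] <;> linarith [h6.1, h6.2]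
      have := hmono (Set.left_mem_Icc.2 huw) (Set.right_mem_Icc.2 huw) huw
      rw [hG0] at this
      simpa [hG] using this
    have k1 := key 1 (Or.inl rfl)
    have k2 := key (-1) (Or.inr rfl)
    rw [abs_le, hc]
    constructor
    · linarith [k2]
    · linarith [k1]
  have hν'qw : ν' q * w = 1 := by
    rw [hw]; field_simp
  have hεu : ε * u ^ 2 ≤ γ ^ 2 := by
    have hsq : Real.sqrt ε ^ 2 = ε := Real.sq_sqrt hε.le
    have hsqpos : 0 < Real.sqrt ε := Real.sqrt_pos.2 hε
    have : u * Real.sqrt ε ≤ γ := by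
      rw [hΘ] at huΘ
      exact (le_div_iff₀ hsqpos).mp huΘ
    have h2 : (u * Real.sqrt ε) ^ 2 ≤ γ ^ 2 :=
      pow_le_pow_left₀ (mul_nonneg hupos.le (Real.sqrt_nonneg ε)) this 2
    have h3 : (u * Real.sqrt ε) ^ 2 = ε * u ^ 2 := by rw [mul_pow, hsq]; ring
    linarith
  have hlin : ν' q * (u * w) = u := by
    rw [← mul_assoc, mul_comm (ν' q) u, mul_assoc, hν'qw, mul_one]
  have hquad : R * (u * w) ^ 2 = ε * u ^ 2 := by
    rw [hεR]; ring
  have hνc_ub : ν c ≤ Real.log n + u + γ ^ 2 := by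
    have h := (abs_le.mp taylor).2
    rw [hlin, hquad, hνq] at h
    linarith
  have hνc_lb : Real.log n + u - γ ^ 2 ≤ ν c := by
    have h := (abs_le.mp taylor).1
    rw [hlin, hquad, hνq] at h
    linarith
  -- probability computations
  set p := Real.exp (-ν c) with hp
  have hppos : 0 < p := Real.exp_pos _
  have hνc_pos : 0 < ν c := by
    have : ν q ≤ ν c := hνmono.monotoneOn (Set.mem_Ici.mpr hq)
      (Set.mem_Ici.mpr (le_trans hq hqc)) hqc
    rw [hνq] at this; linarith
  have hp1 : p ≤ 1 := by
    rw [hp, Real.exp_le_one_iff]; linarith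
  set A : ℕ → Set Ω := fun i => {ω | c < ξ i ω} with hA
  have hAmeas : ∀ i, MeasurableSet (A i) := fun i =>
    measurableSet_lt measurable_const (hmeas i)
  have hPA : ∀ i, P (A i) = ENNReal.ofReal p := by
    intro i
    simp only [hA, hp]
    rw [← htail i c harg, ENNReal.ofReal_toReal (measure_ne_top P _)]
  -- identify the event
  have hev : {ω | u < ((Finset.range n).sup' (Finset.nonempty_range_iff.mpr (by omega))
      (fun i => ξ i ω) - q) / w} = ⋃ i ∈ Finset.range n, A i := by
    ext ω
    simp only [Set.mem_setOf_eq, Set.mem_iUnion, hA, lt_div_iff₀ hwpos, exists_prop]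
    rw [show u * w = c - q by rw [hc]; ring, sub_lt_sub_iff_right, Finset.lt_sup'_iff]
  have hcompl : (⋃ i ∈ Finset.range n, A i)ᶜ = ⋂ i ∈ Finset.range n, (A i)ᶜ := by
    simp [Set.compl_iUnion]
  have hindep_prod : P (⋂ i ∈ Finset.range n, (A i)ᶜ) =
      ∏ i ∈ Finset.range n, P ((A i)ᶜ) := by
    apply hindep.meas_biInter
    intro i _
    refine ⟨Set.Iic c, measurableSet_Iic, ?_⟩
    ext ω
    simp [hA, not_lt]
  have hPAc : ∀ i, P ((A i)ᶜ) = ENNReal.ofReal (1 - p) := by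
    intro i
    rw [measure_compl (hAmeas i) (measure_ne_top P _), hPA i, measure_univ,
      ← ENNReal.ofReal_one, ← ENNReal.ofReal_sub _ hppos.le]
  have hPint : P (⋂ i ∈ Finset.range n, (A i)ᶜ) = ENNReal.ofReal ((1 - p) ^ n) := by
    rw [hindep_prod]
    simp_rw [hPAc]
    rw [Finset.prod_const, Finset.card_range, ← ENNReal.ofReal_pow (sub_nonneg.mpr hp1)]
  have hPev : (P {ω | u < ((Finset.range n).sup' (Finset.nonempty_range_iff.mpr (by omega))
      (fun i => ξ i ω) - q) / w}).toReal = 1 - (1 - p) ^ n := by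
    rw [hev]
    have : (⋃ i ∈ Finset.range n, A i) = (⋂ i ∈ Finset.range n, (A i)ᶜ)ᶜ := by
      rw [← hcompl, compl_compl]
    rw [this, measure_compl (by
        exact MeasurableSet.biInter (Set.to_countable _) (fun i _ => (hAmeas i).compl))
      (measure_ne_top P _), hPint, measure_univ]
    have h1pn : (1 - p) ^ n ≤ 1 := pow_le_one₀ (by linarith) (by linarith)
    rw [← ENNReal.ofReal_one, ← ENNReal.ofReal_sub _ (pow_nonneg (by linarith : (0:ℝ) ≤ 1 - p) n),
      ENNReal.toReal_ofReal (by linarith)]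
  rw [hPev]
  -- final elementary inequality
  set a := Real.exp (-γ ^ 2) * Real.exp (-u) with ha
  set b := Real.exp (-(2 * u)) with hb
  have hapos : 0 < a := by positivity
  by_cases hcase : a ≤ b
  · have h1pn : (1 - p) ^ n ≤ 1 := pow_le_one₀ (by linarith) (by linarith)
    linarith
  push_neg at hcase
  have hγu : γ ^ 2 < u := by
    rw [ha, hb, ← Real.exp_add] at hcase
    have := Real.exp_lt_exp.mp hcase
    linarith
  -- bounds on n * p
  have hnp_eq : (n : ℝ) * p = Real.exp (Real.log n - ν c) := by
    rw [hp, Real.exp_sub, Real.exp_log (by positivity : (0:ℝ) < (n:ℝ))]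
    rw [Real.exp_neg]
    field_simp
  have hnp_lb : a ≤ (n : ℝ) * p := by
    rw [hnp_eq, ha, ← Real.exp_add]
    apply Real.exp_le_exp.mpr
    linarith
  have hnp_ub : (n : ℝ) * p ≤ 1 := by
    rw [hnp_eq, ← Real.exp_zero]
    apply Real.exp_le_exp.mpr
    linarith
  have hbern := bern_aux p hppos.le hp1 n
  have hnn : (0 : ℝ) ≤ (n : ℝ) := Nat.cast_nonneg n
  have hhalf : ((n : ℝ) * ((n : ℝ) - 1) / 2) * p ^ 2 ≤ ((n : ℝ) * p) ^ 2 / 2 := by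
    linarith [mul_nonneg hnn (sq_nonneg p)]
  have haE : a = Real.exp (-γ ^ 2 + -u) := by rw [ha, ← Real.exp_add]
  have ha2b : a ^ 2 ≤ b := by
    rw [haE, hb, ← Real.exp_nat_mul]
    apply Real.exp_le_exp.mpr
    push_cast
    linarith [sq_nonneg γ]
  have ha1 : a ≤ 1 := hnp_lb.trans hnp_ub
  have hkey : 0 ≤ ((n : ℝ) * p - a) * (2 - (n : ℝ) * p - a) :=
    mul_nonneg (by linarith) (by linarith)
  have hexp : ((n : ℝ) * p - a) * (2 - (n : ℝ) * p - a) =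
      2 * ((n : ℝ) * p - ((n : ℝ) * p) ^ 2 / 2) - 2 * (a - a ^ 2 / 2) := by ring
  have h3 : a - a ^ 2 / 2 ≤ (n : ℝ) * p - ((n : ℝ) * p) ^ 2 / 2 := by
    rw [hexp] at hkey; linarith
  have h4 : a ^ 2 / 2 ≤ b := by linarith [ha2b, sq_nonneg a]
  linarith [hbern, hhalf, h3, h4]
end
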